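/- Let T be a positive semidefinite self-adjoint operator on an n-dimensional inner product space with rank k ≤ n/2 and all nonzero eigenvalues ≥ 1. Then there exists an idempotent operator P (P² = P) with P*P = T. -/

import Mathlib

open Module

theorem stmt_7 {𝕜 E : Type*} [RCLike 𝕜] [NormedAddCommGroup E]
    [InnerProductSpace 𝕜 E] [FiniteDimensional 𝕜 E]
    (T : E →ₗ[𝕜] E) (hsa : T.IsSymmetric)
    (hpos : ∀ x : E, 0 ≤ RCLike.re (inner 𝕜 (T x) x : 𝕜))
    (hrank : 2 * Module.finrank 𝕜 (LinearMap.range T) ≤ Module.finrank 𝕜 E)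
    (heig : ∀ μ : ℝ, μ ≠ 0 → Module.End.HasEigenvalue T ((μ : ℝ) : 𝕜) → 1 ≤ μ) :
    ∃ P : E →ₗ[𝕜] E, P ∘ₗ P = P ∧ (LinearMap.adjoint P) ∘ₗ P = T := by
  classical
  set n := Module.finrank 𝕜 E with hn
  have hfr : Module.finrank 𝕜 E = n := rfl
  set b := hsa.eigenvectorBasis hfr with hb
  set μ := hsa.eigenvalues hfr with hμ
  have hμ1 : ∀ i, μ i ≠ 0 → 1 ≤ μ i := fun i hi =>
    heig (μ i) hi (hsa.hasEigenvalue_eigenvalues hfr i)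
  have hTb : ∀ i, T (b i) = (μ i : 𝕜) • b i := hsa.apply_eigenvectorBasis hfr
  have hON := b.orthonormal
  have hONite := orthonormal_iff_ite.mp hON
  set p : Fin n → Prop := fun i => μ i ≠ 0 with hp
  have hmem : ∀ i, p i → b i ∈ LinearMap.range T := by
    intro i hi
    refine ⟨((μ i : 𝕜))⁻¹ • b i, ?_⟩
    rw [map_smul, hTb i, smul_smul, inv_mul_cancel₀ (by exact_mod_cast hi), one_smul]
  have hcard1 : Fintype.card {i // p i} ≤ Module.finrank 𝕜 (LinearMap.range T) := by
    have hli : LinearIndependent 𝕜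
        (fun i : {i // p i} => (⟨b i.1, hmem i.1 i.2⟩ : LinearMap.range T)) := by
      apply LinearIndependent.of_comp (LinearMap.range T).subtype
      exact (hON.linearIndependent).comp (Subtype.val : {i // p i} → Fin n)
        Subtype.val_injective
    exact hli.fintype_card_le_finrank
  have hcard2 : Fintype.card {i // p i} ≤ Fintype.card {i // ¬ p i} := by
    have h1 : Fintype.card {i // ¬ p i} = n - Fintype.card {i // p i} := by
      rw [Fintype.card_subtype_compl, Fintype.card_fin]
    omega
  obtain ⟨f⟩ := Function.Embedding.nonempty_of_card_le hcard2
  set c : Fin n → ℝ := fun i => Real.sqrt (μ i - 1) with hc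
  have hc2 : ∀ i, p i → (c i) * (c i) = μ i - 1 := fun i hi =>
    Real.mul_self_sqrt (by linarith [hμ1 i hi])
  set P : E →ₗ[𝕜] E := b.toBasis.constr 𝕜
    (fun i => if h : p i then b i + ((c i : 𝕜)) • b (f ⟨i, h⟩) else 0) with hP
  have hPb : ∀ i, P (b i)
      = if h : p i then b i + ((c i : 𝕜)) • b (f ⟨i, h⟩) else 0 := by
    intro i
    rw [hP, ← OrthonormalBasis.coe_toBasis b, Basis.constr_basis]
  have hPpos : ∀ i (h : p i), P (b i) = b i + ((c i : 𝕜)) • b (f ⟨i, h⟩) := by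
    intro i h; rw [hPb, dif_pos h]
  have hPneg : ∀ i, ¬ p i → P (b i) = 0 := by
    intro i h; rw [hPb, dif_neg h]
  refine ⟨P, ?_, ?_⟩
  · apply b.toBasis.ext
    intro i
    simp only [LinearMap.comp_apply, OrthonormalBasis.coe_toBasis]
    by_cases h : p i
    · have hfi : ¬ p ((f ⟨i, h⟩ : {i // ¬ p i}) : Fin n) := (f ⟨i, h⟩).2
      rw [hPpos i h, map_add, map_smul, hPpos i h, hPneg _ hfi, smul_zero, add_zero]
    · rw [hPneg i h, map_zero]
  · apply b.toBasis.ext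
    intro i
    apply b.repr.injective
    ext j
    rw [OrthonormalBasis.repr_apply_apply, OrthonormalBasis.repr_apply_apply]
    simp only [LinearMap.comp_apply, OrthonormalBasis.coe_toBasis]
    rw [LinearMap.adjoint_inner_right, hTb i, inner_smul_right, hONite]
    by_cases hi : p i
    · by_cases hj : p j
      · have hfj : ¬ p ((f ⟨j, hj⟩ : {i // ¬ p i}) : Fin n) := (f ⟨j, hj⟩).2
        have hfi : ¬ p ((f ⟨i, hi⟩ : {i // ¬ p i}) : Fin n) := (f ⟨i, hi⟩).2
        rw [hPpos j hj, hPpos i hi]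
        have e1 : j ≠ ((f ⟨i, hi⟩ : {i // ¬ p i}) : Fin n) :=
          fun h => hfi (by rw [← h]; exact hj)
        have e2 : ((f ⟨j, hj⟩ : {i // ¬ p i}) : Fin n) ≠ i :=
          fun h => hfj (by rw [h]; exact hi)
        have e3 : (((f ⟨j, hj⟩ : {i // ¬ p i}) : Fin n)
            = ((f ⟨i, hi⟩ : {i // ¬ p i}) : Fin n)) ↔ j = i := by
          constructor
          · intro h
            have := f.injective (Subtype.ext h)
            exact Subtype.mk_eq_mk.mp this
          · intro h; subst h; rfl
        simp only [inner_add_left, inner_add_right, inner_smul_left, inner_smul_right,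
          hONite, RCLike.conj_ofReal, e1, e2, e3, if_false, mul_zero, add_zero, zero_add,
          mul_ite, mul_one]
        by_cases hji : j = i
        · subst hji
          simp only [if_pos rfl]
          have h2 := hc2 j hj
          have : ((c j : 𝕜)) * (c j : 𝕜) = (μ j : 𝕜) - 1 := by
            rw [← RCLike.ofReal_mul, h2]; push_cast; ring
          rw [this]; norm_num
        · simp [hji]
      · rw [hPneg j hj]
        have hji : j ≠ i := fun h => hj (h ▸ hi)
        simp [hji]
    · rw [hPneg i hi]
      have : (μ i : 𝕜) = 0 := by
        simp only [hp, ne_eq, not_not] at hi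
        exact_mod_cast hi
      simp [this]
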